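/- Let a_1 > ... > a_r and b_1 < ... < b_r be real numbers with a_i > b_j for all 1 ≤ i ≤ r, 1 ≤ j ≤ r-1; a_1 > b_r and a_2 > b_r; and a_i < b_r for all i ≥ 3. Define the r×r matrix C by C_{ij} = 1/(a_i - b_j) if a_i > b_j and 0 otherwise. Then (-1)^{r+1} det(C) < 0; in particular det(C) ≠ 0. -/

import Mathlib

open Matrix Finset

noncomputable def Fprod (m : ℕ) (a b : Fin m → ℝ) : ℝ :=
  ∏ i, ∏ j, if i < j then (a j - a i) * (b i - b j) else 1

noncomputable def Gprod (m : ℕ) (a b : Fin m → ℝ) : ℝ :=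
  ∏ i, ∏ j, (a i - b j)

theorem cauchy_det : ∀ (m : ℕ) (a b : Fin m → ℝ), (∀ i j, a i ≠ b j) →
    (Matrix.of fun i j => (a i - b j)⁻¹).det = Fprod m a b / Gprod m a b := by
  intro m
  induction m with
  | zero =>
    intro a b _
    simp [Matrix.det_isEmpty, Fprod, Gprod]
  | succ k ih =>
    intro a b hne
    have hsub : ∀ i j, a i - b j ≠ 0 := fun i j => sub_ne_zero.mpr (hne i j)
    set L : Fin (k+1) := Fin.last k with hLdef
    -- Step A: subtract last row from the others
    have stepA : (Matrix.of fun i j => (a i - b j)⁻¹).det =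
        (Matrix.of fun i j : Fin (k+1) =>
          if i = L then (a i - b j)⁻¹ else (a i - b j)⁻¹ - (a L - b j)⁻¹).det := by
      apply Matrix.det_eq_of_forall_row_eq_smul_add_const
        (fun i => if i = L then 0 else 1) L (by simp)
      intro i j
      by_cases hi : i = L <;> simp [Matrix.of_apply, hi]
    -- Step B: factor rows and columns
    have stepB : (Matrix.of fun i j : Fin (k+1) =>
        if i = L then (a i - b j)⁻¹ else (a i - b j)⁻¹ - (a L - b j)⁻¹).det
        = (∏ i : Fin k, (a L - a i.castSucc)) * (∏ j, (a L - b j)⁻¹) *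
          (Matrix.of fun i j : Fin (k+1) => if i = L then (1:ℝ) else (a i - b j)⁻¹).det := by
      have h1 : (Matrix.of fun i j : Fin (k+1) =>
          if i = L then (a i - b j)⁻¹ else (a i - b j)⁻¹ - (a L - b j)⁻¹)
          = Matrix.of (fun i j => (if i = L then (1:ℝ) else (a L - a i)) *
              (Matrix.of (fun i j => (a L - b j)⁻¹ *
                (Matrix.of fun i j : Fin (k+1) =>
                  if i = L then (1:ℝ) else (a i - b j)⁻¹) i j) i j)) := by
        ext i j
        by_cases hi : i = L
        · simp [hi]
        · simp only [Matrix.of_apply, if_neg hi]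
          rw [inv_sub_inv (hsub i j) (hsub L j)]
          rw [div_eq_mul_inv, mul_inv]
          ring_nf
      rw [h1, Matrix.det_mul_column, Matrix.det_mul_row]
      have h2 : (∏ i : Fin (k+1), if i = L then (1:ℝ) else (a L - a i))
          = ∏ i : Fin k, (a L - a i.castSucc) := by
        rw [Fin.prod_univ_castSucc]
        simp [hLdef, Fin.castSucc_lt_last, (Fin.castSucc_lt_last _).ne]
      rw [h2]; ring
    -- Step C: subtract last column from the others
    set N : Matrix (Fin (k+1)) (Fin (k+1)) ℝ :=
      Matrix.of fun i j : Fin (k+1) => if i = L then (1:ℝ) else (a i - b j)⁻¹ with hN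
    set N' : Matrix (Fin (k+1)) (Fin (k+1)) ℝ :=
      Matrix.of fun i j : Fin (k+1) => if j = L then N i j else N i j - N i L with hN'
    have stepC : N.det = N'.det := by
      rw [← Matrix.det_transpose N, ← Matrix.det_transpose N']
      apply Matrix.det_eq_of_forall_row_eq_smul_add_const
        (fun j => if j = L then 0 else 1) L (by simp)
      intro j i
      by_cases hj : j = L <;> simp [Matrix.transpose_apply, hN', hj]
    -- Step D: factor rows and columns of N'
    set P : Matrix (Fin (k+1)) (Fin (k+1)) ℝ :=
      Matrix.of fun i j : Fin (k+1) =>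
        if i = L then (if j = L then (1:ℝ) else 0)
        else (if j = L then (1:ℝ) else (a i - b j)⁻¹) with hP
    have stepD : N'.det = (∏ i : Fin k, (a i.castSucc - b L)⁻¹) *
        (∏ j : Fin k, (b j.castSucc - b L)) * P.det := by
      have h1 : N' = Matrix.of (fun i j => (if i = L then (1:ℝ) else (a i - b L)⁻¹) *
          (Matrix.of (fun i j => (if j = L then (1:ℝ) else (b j - b L)) * P i j) i j)) := by
        ext i j
        by_cases hi : i = L <;> by_cases hj : j = L
        · simp [hN', hN, hP, hi, hj]
        · simp [hN', hN, hP, hi, hj]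
        · simp [hN', hN, hP, hi, hj]
        · simp only [hN', hN, hP, Matrix.of_apply, if_neg hi, if_neg hj]
          rw [inv_sub_inv (hsub i j) (hsub i L)]
          rw [div_eq_mul_inv, mul_inv]
          ring_nf
      rw [h1, Matrix.det_mul_column, Matrix.det_mul_row]
      have h2 : (∏ i : Fin (k+1), if i = L then (1:ℝ) else (a i - b L)⁻¹)
          = ∏ i : Fin k, (a i.castSucc - b L)⁻¹ := by
        rw [Fin.prod_univ_castSucc]
        simp [hLdef, (Fin.castSucc_lt_last _).ne]
      have h3 : (∏ j : Fin (k+1), if j = L then (1:ℝ) else (b j - b L))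
          = ∏ j : Fin k, (b j.castSucc - b L) := by
        rw [Fin.prod_univ_castSucc]
        simp [hLdef, (Fin.castSucc_lt_last _).ne]
      rw [h2, h3]; ring
    -- Step E: expand P along the last row
    have stepE : P.det =
        (Matrix.of fun i j : Fin k => (a i.castSucc - b j.castSucc)⁻¹).det := by
      rw [Matrix.det_succ_row P L]
      rw [Finset.sum_eq_single L]
      · have : P L L = 1 := by simp [hP]
        rw [this]
        have hsA : L.succAbove = Fin.castSucc := Fin.succAbove_last
        have : P.submatrix L.succAbove L.succAbove =
            Matrix.of fun i j : Fin k => (a i.castSucc - b j.castSucc)⁻¹ := by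
          ext i j
          simp [Matrix.submatrix_apply, hsA, hP, hLdef, (Fin.castSucc_lt_last _).ne]
        rw [this]
        have : ((-1 : ℝ)) ^ ((L:ℕ) + (L:ℕ)) = 1 := by
          rw [← two_mul]; exact Even.neg_one_pow ⟨(L:ℕ), by ring⟩
        rw [this, one_mul, one_mul]
      · intro j _ hj
        have : P L j = 0 := by simp [hP, hj]
        rw [this]; ring
      · simp
    rw [stepA, stepB, stepC, stepD, stepE,
      ih (fun i => a i.castSucc) (fun j => b j.castSucc) (fun i j => hne _ _)]
    -- combine products
    have hFsplit : Fprod (k+1) a b =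
        Fprod k (fun i => a i.castSucc) (fun j => b j.castSucc) *
          ((∏ i : Fin k, (a L - a i.castSucc)) * (∏ j : Fin k, (b j.castSucc - b L))) := by
      unfold Fprod
      rw [Fin.prod_univ_castSucc]
      have hlast : (∏ j : Fin (k+1), if L < j then (a j - a L) * (b L - b j) else 1) = 1 := by
        apply Finset.prod_eq_one
        intro j _
        rw [if_neg (by simp [hLdef, Fin.le_last j, not_lt.mpr (Fin.le_last j)])]
      rw [hlast, mul_one]
      have inner : ∀ i : Fin k,
          (∏ j : Fin (k+1), if i.castSucc < j then (a j - a i.castSucc) * (b i.castSucc - b j) else 1)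
          = (∏ j : Fin k, if i < j then
              (a j.castSucc - a i.castSucc) * (b i.castSucc - b j.castSucc) else 1) *
            ((a L - a i.castSucc) * (b i.castSucc - b L)) := by
        intro i
        rw [Fin.prod_univ_castSucc]
        rw [if_pos (Fin.castSucc_lt_last i)]
        congr 1
      rw [Finset.prod_congr rfl (fun i _ => inner i), Finset.prod_mul_distrib,
        Finset.prod_mul_distrib]
    have hGsplit : Gprod (k+1) a b =
        Gprod k (fun i => a i.castSucc) (fun j => b j.castSucc) *
          ((∏ i : Fin k, (a i.castSucc - b L)) * (∏ j : Fin (k+1), (a L - b j))) := by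
      unfold Gprod
      rw [Fin.prod_univ_castSucc]
      have h5 : ∀ i : Fin k, (∏ j : Fin (k+1), (a i.castSucc - b j))
          = (∏ j : Fin k, (a i.castSucc - b j.castSucc)) * (a i.castSucc - b L) :=
        fun i => Fin.prod_univ_castSucc _
      rw [Finset.prod_congr rfl (fun i _ => h5 i), Finset.prod_mul_distrib]
      ring
    rw [hFsplit, hGsplit]
    rw [div_eq_mul_inv, div_eq_mul_inv, mul_inv, mul_inv,
      ← Finset.prod_inv_distrib, ← Finset.prod_inv_distrib]
    ring

lemma Fprod_pos (m : ℕ) (a b : Fin m → ℝ)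
    (hA : ∀ p q : Fin m, p < q → a q < a p) (hB : ∀ p q : Fin m, p < q → b p < b q) :
    0 < Fprod m a b := by
  apply Finset.prod_pos
  intro i _
  apply Finset.prod_pos
  intro j _
  by_cases h : i < j
  · rw [if_pos h]
    exact mul_pos_of_neg_of_neg (by linarith [hA i j h]) (by linarith [hB i j h])
  · rw [if_neg h]; norm_num

lemma Gprod_pos (m : ℕ) (a b : Fin m → ℝ) (h : ∀ i j, b j < a i) : 0 < Gprod m a b := by
  apply Finset.prod_pos
  intro i _
  exact Finset.prod_pos fun j _ => by linarith [h i j]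

lemma pos_right_of_mul (x y : ℝ) (h : 0 < x * y) (hx : 0 < x) : 0 < y := by
  by_contra hy
  push_neg at hy
  nlinarith

set_option maxHeartbeats 2000000 in
theorem stmt_8 (n : ℕ) (a b : Fin (n + 2) → ℝ)
    (ha : StrictAnti a) (hb : StrictMono b)
    (h1 : ∀ i j : Fin (n + 2), j ≠ Fin.last (n + 1) → a i > b j)
    (h2 : a 0 > b (Fin.last (n + 1))) (h3 : a 1 > b (Fin.last (n + 1)))
    (h4 : ∀ i : Fin (n + 2), 2 ≤ i.val → a i < b (Fin.last (n + 1))) :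
    (-1 : ℝ) ^ (n + 2 + 1) *
      (Matrix.of fun i j : Fin (n + 2) =>
        if b j < a i then 1 / (a i - b j) else 0).det < 0 ∧
    (Matrix.of fun i j : Fin (n + 2) =>
      if b j < a i then 1 / (a i - b j) else 0).det ≠ 0 := by
  set β := b (Fin.last (n + 1)) with hβ
  set C : Matrix (Fin (n+2)) (Fin (n+2)) ℝ :=
    Matrix.of fun i j : Fin (n + 2) => if b j < a i then 1 / (a i - b j) else 0 with hC
  set Bc : Fin (n+1) → ℝ := fun j => b j.castSucc with hBc
  set f : Fin n → ℝ := fun k => a k.succ.succ with hf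
  -- basic facts
  have hcsne : ∀ j : Fin (n+1), j.castSucc ≠ Fin.last (n+1) := fun j => (Fin.castSucc_lt_last j).ne
  have hβB : ∀ j : Fin (n+1), Bc j < β := fun j => hb (Fin.castSucc_lt_last j)
  have hfB : ∀ (k : Fin n) (j : Fin (n+1)), Bc j < f k := fun k j => h1 _ _ (hcsne j)
  have hfa1 : ∀ k : Fin n, f k < a 1 := by
    intro k
    apply ha
    rw [Fin.lt_def]
    simp [Fin.val_one]
  have hfa0 : ∀ k : Fin n, f k < a 0 := by
    intro k
    apply ha
    rw [Fin.lt_def]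
    simp
  have ha01 : a 1 < a 0 := by
    apply ha
    rw [Fin.lt_def]
    simp [Fin.val_one]
  have hBmono : ∀ p q : Fin (n+1), p < q → Bc p < Bc q :=
    fun p q h => hb (Fin.castSucc_lt_castSucc_iff.mpr h)
  -- the generic first-row value
  set g : ℝ → Fin (n+1) → ℝ := fun x => Fin.cons x f with hg
  have hg0 : ∀ x, g x 0 = x := fun x => by simp [hg]
  have hgs : ∀ x (k : Fin n), g x k.succ = f k := fun x k => by simp [hg]
  have hgt : ∀ x : ℝ, (∀ k : Fin n, f k < x) → ∀ p q : Fin (n+1), p < q → g x q < g x p := by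
    intro x hx p q hpq
    rcases Fin.eq_zero_or_eq_succ q with rfl | ⟨q', rfl⟩
    · exact absurd hpq (Fin.not_lt_zero p)
    · rw [hgs]
      rcases Fin.eq_zero_or_eq_succ p with rfl | ⟨p', rfl⟩
      · rw [hg0]; exact hx q'
      · rw [hgs]
        apply ha
        have hpq' : p' < q' := by rwa [Fin.succ_lt_succ_iff] at hpq
        exact Fin.succ_lt_succ_iff.mpr (Fin.succ_lt_succ_iff.mpr hpq')
  have hgB : ∀ x : ℝ, β < x → ∀ (i : Fin (n+1)) (j : Fin (n+1)), Bc j < g x i := by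
    intro x hx i j
    rcases Fin.eq_zero_or_eq_succ i with rfl | ⟨i', rfl⟩
    · rw [hg0]; exact lt_trans (hβB j) hx
    · rw [hgs]; exact hfB i' j
  -- minors are Cauchy matrices
  have hsne : ∀ x : ℝ, β < x → ∀ (i : Fin (n+1)) (j : Fin (n+1)), g x i ≠ Bc j :=
    fun x hx i j => (hgB x hx i j).ne'
  -- identification of the two minors
  have hM0 : C.submatrix (0 : Fin (n+2)).succAbove (Fin.last (n+1)).succAbove
      = Matrix.of fun k l : Fin (n+1) => (g (a 1) k - Bc l)⁻¹ := by
    ext k l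
    have h0 : (0 : Fin (n+2)).succAbove k = k.succ := by rw [Fin.succAbove_zero]
    have hl : (Fin.last (n+1)).succAbove l = l.castSucc := by rw [Fin.succAbove_last]
    have hga : a ((0 : Fin (n+2)).succAbove k) = g (a 1) k := by
      rw [h0]
      rcases Fin.eq_zero_or_eq_succ k with rfl | ⟨k', rfl⟩
      · rw [hg0, Fin.succ_zero_eq_one]
      · rw [hgs, hf]
    rw [Matrix.submatrix_apply, hC]
    simp only [Matrix.of_apply]
    rw [hl, if_pos (h1 _ _ (hcsne l)), one_div, hga]
  have hM1 : C.submatrix (1 : Fin (n+2)).succAbove (Fin.last (n+1)).succAbove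
      = Matrix.of fun k l : Fin (n+1) => (g (a 0) k - Bc l)⁻¹ := by
    ext k l
    have hl : (Fin.last (n+1)).succAbove l = l.castSucc := by rw [Fin.succAbove_last]
    have hga : a ((1 : Fin (n+2)).succAbove k) = g (a 0) k := by
      rcases Fin.eq_zero_or_eq_succ k with rfl | ⟨k', rfl⟩
      · have : (1 : Fin (n+2)).succAbove 0 = 0 := by
          rw [Fin.succAbove_of_castSucc_lt]
          · rfl
          · rw [Fin.castSucc_zero]
            exact Fin.lt_def.mpr (by simp [Fin.val_one])
        rw [this, hg0]
      · have : (1 : Fin (n+2)).succAbove k'.succ = k'.succ.succ := by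
          rw [Fin.succAbove_of_le_castSucc]
          rw [Fin.le_def]
          simp [Fin.val_one]
        rw [this, hgs, hf]
    rw [Matrix.submatrix_apply, hC]
    simp only [Matrix.of_apply]
    rw [hl, if_pos (h1 _ _ (hcsne l)), one_div, hga]
  -- Laplace expansion along the last column
  have hD0 := cauchy_det (n+1) (g (a 1)) Bc (hsne _ h3)
  have hD1 := cauchy_det (n+1) (g (a 0)) Bc (hsne _ h2)
  set F1 : ℝ := Fprod (n+1) (g (a 1)) Bc with hF1d
  set F0 : ℝ := Fprod (n+1) (g (a 0)) Bc with hF0d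
  set G1 : ℝ := Gprod (n+1) (g (a 1)) Bc with hG1d
  set G0 : ℝ := Gprod (n+1) (g (a 0)) Bc with hG0d
  have hdet : C.det = (-1:ℝ)^(n+1) * ((a 0 - β)⁻¹ * (F1 / G1))
      + (-1:ℝ)^(n+2) * ((a 1 - β)⁻¹ * (F0 / G0)) := by
    rw [Matrix.det_succ_column C (Fin.last (n+1))]
    rw [Fin.sum_univ_succ, Fin.sum_univ_succ]
    have hrest : (∑ i : Fin n,
        (-1:ℝ)^(((i.succ.succ : Fin (n+2)) : ℕ) + ((Fin.last (n+1) : Fin (n+2)) : ℕ)) *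
          C i.succ.succ (Fin.last (n+1)) *
          (C.submatrix (i.succ.succ).succAbove (Fin.last (n+1)).succAbove).det) = 0 := by
      apply Finset.sum_eq_zero
      intro i _
      have : C i.succ.succ (Fin.last (n+1)) = 0 := by
        rw [hC]
        simp only [Matrix.of_apply]
        rw [if_neg]
        push_neg
        exact le_of_lt (h4 _ (by simp [Fin.val_succ]))
      rw [this]
      ring
    rw [Fin.succ_zero_eq_one, hrest, add_zero]
    have hc0 : C 0 (Fin.last (n+1)) = (a 0 - β)⁻¹ := by
      rw [hC]; simp only [Matrix.of_apply]; rw [if_pos h2, one_div]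
    have hc1 : C 1 (Fin.last (n+1)) = (a 1 - β)⁻¹ := by
      rw [hC]; simp only [Matrix.of_apply]; rw [if_pos h3, one_div]
    rw [hc0, hc1, hM0, hM1, hD0, hD1]
    simp only [Fin.val_zero, Fin.val_one, Fin.val_last, Nat.zero_add]
    rw [show 1 + (n+1) = n + 2 from by omega]
    ring
  -- positivity of the four quantities
  have hG1pos : 0 < G1 := Gprod_pos _ _ _ (fun i j => hgB _ h3 i j)
  have hG0pos : 0 < G0 := Gprod_pos _ _ _ (fun i j => hgB _ h2 i j)
  have hF1pos : 0 < F1 := Fprod_pos _ _ _ (hgt _ hfa1) hBmono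
  have hF0pos : 0 < F0 := Fprod_pos _ _ _ (hgt _ hfa0) hBmono
  -- splitting the products
  set T : ℝ := ∏ p : Fin n, ∏ q : Fin (n+1),
      if p.succ < q then ((Fin.cons 0 f : Fin (n+1) → ℝ) q - f p) * (Bc p.succ - Bc q) else 1
    with hT
  set Q : ℝ := ∏ p : Fin n, ∏ j : Fin (n+1), (f p - Bc j) with hQ
  set V : ℝ := ∏ q : Fin n, (Bc 0 - Bc q.succ) with hV
  have hFsplit : ∀ x : ℝ, Fprod (n+1) (g x) Bc =
      (((-1:ℝ)^n * ∏ q : Fin n, (x - f q)) * V) * T := by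
    intro x
    unfold Fprod
    rw [Fin.prod_univ_succ]
    congr 1
    · -- first row factor
      rw [Fin.prod_univ_succ, if_neg (lt_irrefl _), one_mul]
      have e : ∀ q : Fin n, (if (0:Fin (n+1)) < q.succ then
          (g x q.succ - g x 0) * (Bc 0 - Bc q.succ) else 1)
          = ((-1) * (x - f q)) * (Bc 0 - Bc q.succ) := by
        intro q
        rw [if_pos (Fin.succ_pos q), hgs, hg0]
        ring
      rw [Finset.prod_congr rfl (fun q _ => e q), Finset.prod_mul_distrib,
        Finset.prod_mul_distrib, Finset.prod_const, Finset.card_univ, Fintype.card_fin, hV]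
    · -- remaining rows
      rw [hT]
      apply Finset.prod_congr rfl
      intro p _
      apply Finset.prod_congr rfl
      intro q _
      rcases Fin.eq_zero_or_eq_succ q with rfl | ⟨q', rfl⟩
      · rw [if_neg (Fin.not_lt_zero _), if_neg (Fin.not_lt_zero _)]
      · rw [hgs, hgs, Fin.cons_succ]
  have hGsplit : ∀ x : ℝ, Gprod (n+1) (g x) Bc = (∏ j : Fin (n+1), (x - Bc j)) * Q := by
    intro x
    unfold Gprod
    rw [Fin.prod_univ_succ, hQ]
    refine congrArg₂ (· * ·) ?_ ?_
    · exact Finset.prod_congr rfl fun j _ => by rw [hg0]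
    · exact Finset.prod_congr rfl fun p _ =>
        Finset.prod_congr rfl fun j _ => by rw [hgs]
  set S : ℝ := (-1:ℝ)^n * (V * T) with hS
  set Pi1 : ℝ := ∏ q : Fin n, (a 1 - f q) with hPi1
  set Pi0 : ℝ := ∏ q : Fin n, (a 0 - f q) with hPi0
  set P1 : ℝ := ∏ j : Fin (n+1), (a 1 - Bc j) with hP1
  set P0 : ℝ := ∏ j : Fin (n+1), (a 0 - Bc j) with hP0
  have hF1e : F1 = Pi1 * S := by rw [hF1d, hFsplit (a 1), hS, hPi1]; ring
  have hF0e : F0 = Pi0 * S := by rw [hF0d, hFsplit (a 0), hS, hPi0]; ring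
  have hG1e : G1 = P1 * Q := by rw [hG1d, hGsplit (a 1), hP1]
  have hG0e : G0 = P0 * Q := by rw [hG0d, hGsplit (a 0), hP0]
  have hPi1pos : 0 < Pi1 := Finset.prod_pos fun q _ => sub_pos.mpr (hfa1 q)
  have hPi0pos : 0 < Pi0 := Finset.prod_pos fun q _ => sub_pos.mpr (hfa0 q)
  have hQpos : 0 < Q := Finset.prod_pos fun p _ =>
    Finset.prod_pos fun j _ => sub_pos.mpr (hfB p j)
  have hSpos : 0 < S := by
    apply pos_right_of_mul Pi1 S _ hPi1pos
    rw [← hF1e]; exact hF1pos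
  -- the key comparison
  set c : Fin (n+1) → ℝ := Fin.snoc f β with hc
  have hsnoc : ∀ x : ℝ, (∏ q : Fin n, (x - f q)) * (x - β) = ∏ j : Fin (n+1), (x - c j) := by
    intro x
    rw [Fin.prod_univ_castSucc]
    congr 1
    · exact Finset.prod_congr rfl fun q _ => by rw [hc, Fin.snoc_castSucc]
    · rw [hc, Fin.snoc_last]
  have hcB : ∀ j : Fin (n+1), Bc j < c j := by
    intro j
    induction j using Fin.lastCases with
    | last => rw [hc, Fin.snoc_last]; exact hβB _
    | cast q => rw [hc, Fin.snoc_castSucc]; exact hfB q _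
  have hca1 : ∀ j : Fin (n+1), c j < a 1 := by
    intro j
    induction j using Fin.lastCases with
    | last => rw [hc, Fin.snoc_last]; exact h3
    | cast q => rw [hc, Fin.snoc_castSucc]; exact hfa1 q
  have hBa0 : ∀ j : Fin (n+1), Bc j < a 0 := fun j => h1 _ _ (hcsne j)
  have hBa1 : ∀ j : Fin (n+1), Bc j < a 1 := fun j => h1 _ _ (hcsne j)
  have core : Pi1 * (a 1 - β) * P0 < Pi0 * (a 0 - β) * P1 := by
    have e1 : Pi1 * (a 1 - β) * P0 = ∏ j : Fin (n+1), ((a 1 - c j) * (a 0 - Bc j)) := by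
      rw [hPi1, hP0, hsnoc (a 1), ← Finset.prod_mul_distrib]
    have e0 : Pi0 * (a 0 - β) * P1 = ∏ j : Fin (n+1), ((a 0 - c j) * (a 1 - Bc j)) := by
      rw [hPi0, hP1, hsnoc (a 0), ← Finset.prod_mul_distrib]
    rw [e1, e0]
    apply Finset.prod_lt_prod_of_nonempty
    · intro j _
      exact mul_pos (sub_pos.mpr (hca1 j)) (sub_pos.mpr (hBa0 j))
    · intro j _
      nlinarith [mul_pos (sub_pos.mpr ha01) (sub_pos.mpr (hcB j)), hca1 j, hBa1 j]
    · exact Finset.univ_nonempty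
  have key : (a 0 - β)⁻¹ * (F1 / G1) < (a 1 - β)⁻¹ * (F0 / G0) := by
    have e1 : (a 0 - β)⁻¹ * (F1 / G1) = F1 / (G1 * (a 0 - β)) := by
      rw [div_eq_mul_inv, div_eq_mul_inv, mul_inv]; ring
    have e0 : (a 1 - β)⁻¹ * (F0 / G0) = F0 / (G0 * (a 1 - β)) := by
      rw [div_eq_mul_inv, div_eq_mul_inv, mul_inv]; ring
    rw [e1, e0, div_lt_div_iff₀ (mul_pos hG1pos (sub_pos.mpr h2)) (mul_pos hG0pos (sub_pos.mpr h3))]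
    calc F1 * (G0 * (a 1 - β)) = (Pi1 * (a 1 - β) * P0) * (S * Q) := by
          rw [hF1e, hG0e]; ring
      _ < (Pi0 * (a 0 - β) * P1) * (S * Q) :=
          mul_lt_mul_of_pos_right core (mul_pos hSpos hQpos)
      _ = F0 * (G1 * (a 0 - β)) := by rw [hF0e, hG1e]; ring
  -- conclusion
  have hlt : (-1 : ℝ) ^ (n + 2 + 1) * C.det < 0 := by
    rw [hdet]
    have hp1 : (-1:ℝ)^(n+2+1) * (-1)^(n+1) = 1 := by
      rw [← pow_add]; exact Even.neg_one_pow ⟨n+2, by ring⟩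
    have hp2 : (-1:ℝ)^(n+2+1) * (-1)^(n+2) = -1 := by
      rw [← pow_add]; exact Odd.neg_one_pow ⟨n+2, by ring⟩
    calc (-1:ℝ)^(n+2+1) * ((-1:ℝ)^(n+1) * ((a 0 - β)⁻¹ * (F1 / G1))
          + (-1:ℝ)^(n+2) * ((a 1 - β)⁻¹ * (F0 / G0)))
        = ((-1:ℝ)^(n+2+1) * (-1)^(n+1)) * ((a 0 - β)⁻¹ * (F1 / G1))
          + ((-1:ℝ)^(n+2+1) * (-1)^(n+2)) * ((a 1 - β)⁻¹ * (F0 / G0)) := by ring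
      _ = (a 0 - β)⁻¹ * (F1 / G1) - (a 1 - β)⁻¹ * (F0 / G0) := by rw [hp1, hp2]; ring
      _ < 0 := by linarith [key]
  refine ⟨hlt, fun h0 => ?_⟩
  rw [h0, mul_zero] at hlt
  exact lt_irrefl 0 hlt
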